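/- Let μ be a σ-finite measure on (0,1) with μ([a,1)) < ∞ for all a and μ((0,1)) = ∞. Let F : (0,1) → ℂ be bounded measurable with Avg(F) := lim_{a→0⁺} μ([a,1))^{-1} ∫ₐ¹ F dμ = 0, and fix ε > 0 with δ > 0 such that |∫ₐ¹ F dμ| < (ε/2)·μ([a,1)) for all a ≤ δ. Let γ : (0,1) → [0,∞) be an increasing function, constant on [δ,1), with ∫ γ dμ ≤ 1. Then |∫₀¹ F·γ dμ| ≤ ε/2. -/

import Mathlib

open MeasureTheory Set Filter Function

theorem stmt_13
    (μ : Measure ℝ)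
    (hμ_fin : ∀ a ∈ Ioo (0:ℝ) 1, μ (Ico a 1) < ⊤)
    (hμ_inf : μ (Ioo 0 1) = ⊤)
    (F : ℝ → ℂ) (hF_meas : Measurable F) (C : ℝ) (hF_bd : ∀ x, ‖F x‖ ≤ C)
    (ε : ℝ) (hε : 0 < ε) (δ : ℝ) (hδ : δ ∈ Ioo (0:ℝ) 1)
    (hFδ : ∀ a ∈ Ioc (0:ℝ) δ, ‖∫ x in Ico a 1, F x ∂μ‖ < ε / 2 * (μ (Ico a 1)).toReal)
    (γ : ℝ → ℝ) (hγ_nonneg : ∀ x, 0 ≤ γ x)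
    (hγ_mono : MonotoneOn γ (Ioo 0 1))
    (hγ_const : ∀ x ∈ Ico δ 1, γ x = γ δ)
    (hγ_int : IntegrableOn γ (Ioo 0 1) μ)
    (hγ_mass : ∫ x in Ioo 0 1, γ x ∂μ ≤ 1) :
    ‖∫ x in Ioo 0 1, F x * (γ x : ℂ) ∂μ‖ ≤ ε / 2 := by
  have hC : 0 ≤ C := le_trans (norm_nonneg (F 0)) (hF_bd 0)
  have hγδ : 0 ≤ γ δ := hγ_nonneg δ
  have hγ_le : ∀ x ∈ Ioo (0:ℝ) 1, γ x ≤ γ δ := by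
    intro x hx
    rcases le_or_gt x δ with h | h
    · exact hγ_mono hx hδ h
    · exact le_of_eq (hγ_const x ⟨h.le, hx.2⟩)
  -- a measurable monotone extension of γ
  set g : ℝ → ℝ := fun x => sSup (insert 0 (γ '' (Ioo 0 1 ∩ Iic x))) with hg_def
  have hbdd : ∀ x : ℝ, BddAbove (insert 0 (γ '' (Ioo 0 1 ∩ Iic x))) := by
    intro x
    refine ⟨γ δ, ?_⟩
    rintro y (rfl | ⟨t, ⟨ht, _⟩, rfl⟩)
    · exact hγδ
    · exact hγ_le t ht
  have hg_mono : Monotone g := by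
    intro x y hxy
    exact csSup_le_csSup (hbdd y) ⟨0, mem_insert _ _⟩
      (insert_subset_insert (image_mono (inter_subset_inter_right _ (Iic_subset_Iic.2 hxy))))
  have hg_eq : ∀ x ∈ Ioo (0:ℝ) 1, g x = γ x := by
    intro x hx
    apply le_antisymm
    · apply csSup_le ⟨0, mem_insert _ _⟩
      rintro y (rfl | ⟨t, ⟨ht, htx⟩, rfl⟩)
      · exact hγ_nonneg x
      · exact hγ_mono ht hx htx
    · exact le_csSup (hbdd x) (mem_insert_of_mem _ ⟨x, ⟨hx, le_refl x⟩, rfl⟩)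
  have hg_meas : Measurable g := hg_mono.measurable
  -- the two measures
  set ν : Measure ℝ := μ.restrict (Ioo 0 1) with hν_def
  set lam : Measure ℝ := volume.restrict (Ioc 0 (γ δ)) with hlam_def
  haveI : SigmaFinite ν := by
    apply Measure.sigmaFinite_of_countable
      (S := Set.range (fun n : ℕ => Ico ((1:ℝ)/(n+2)) 1 ∪ (Ioo (0:ℝ) 1)ᶜ)) (countable_range _)
    · rintro s ⟨n, rfl⟩
      have h1 : (1:ℝ)/(n+2) ∈ Ioo (0:ℝ) 1 := by
        constructor
        · positivity
        · rw [div_lt_one (by positivity)]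
          have : (0:ℝ) ≤ n := Nat.cast_nonneg n
          linarith
      calc ν (Ico ((1:ℝ)/(n+2)) 1 ∪ (Ioo (0:ℝ) 1)ᶜ)
          ≤ ν (Ico ((1:ℝ)/(n+2)) 1) + ν ((Ioo (0:ℝ) 1)ᶜ) := measure_union_le _ _
        _ = ν (Ico ((1:ℝ)/(n+2)) 1) + 0 := by
            rw [hν_def, Measure.restrict_apply measurableSet_Ioo.compl,
              compl_inter_self, measure_empty]
        _ ≤ μ (Ico ((1:ℝ)/(n+2)) 1) + 0 := by
            gcongr
            exact Measure.restrict_le_self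
        _ < ⊤ := by
            rw [add_zero]
            exact hμ_fin _ h1
    · apply eq_univ_iff_forall.mpr
      intro x
      rw [mem_sUnion]
      by_cases hx : x ∈ Ioo (0:ℝ) 1
      · obtain ⟨n, hn⟩ := exists_nat_gt (1/x)
        refine ⟨_, ⟨n, rfl⟩, Or.inl ⟨?_, hx.2⟩⟩
        have hx0 : (0:ℝ) < x := hx.1
        rw [div_le_iff₀ (by positivity)]
        have hx1 : x * (1/x) = 1 := mul_one_div_cancel (ne_of_gt hx0)
        nlinarith [hn, hx0, hx1]
      · exact ⟨_, ⟨0, rfl⟩, Or.inr hx⟩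
  haveI : IsFiniteMeasure lam := by
    constructor
    rw [hlam_def, Measure.restrict_apply_univ, Real.volume_Ioc]
    exact ENNReal.ofReal_lt_top
  -- the kernel functions
  set f : ℝ → ℝ → ℂ := fun x r => if r < γ x then F x else 0 with hf_def
  set h : ℝ → ℝ → ℝ := fun x r => if r < γ x then 1 else 0 with hh_def
  set A : Set (ℝ × ℝ) := {p | p.2 < g p.1} with hA_def
  have hA_meas : MeasurableSet A := measurableSet_lt measurable_snd (hg_meas.comp measurable_fst)
  have h_ae_fst : ∀ᵐ p ∂(ν.prod lam), p.1 ∈ Ioo (0:ℝ) 1 := by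
    apply ae_iff.mpr
    have hnull : (ν.prod lam) ((Ioo (0:ℝ) 1)ᶜ ×ˢ (univ : Set ℝ)) = 0 := by
      rw [Measure.prod_prod, hν_def, Measure.restrict_apply measurableSet_Ioo.compl,
        compl_inter_self, measure_empty, zero_mul]
    exact measure_mono_null (fun p hp => mem_prod.mpr ⟨hp, mem_univ _⟩) hnull
  have hf_ae : uncurry f =ᵐ[ν.prod lam] A.indicator (fun p => F p.1) := by
    filter_upwards [h_ae_fst] with p hp
    simp only [uncurry, hf_def, hA_def, indicator_apply, mem_setOf_eq, hg_eq p.1 hp]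
  have hh_ae : uncurry h =ᵐ[ν.prod lam] A.indicator (fun _ => (1:ℝ)) := by
    filter_upwards [h_ae_fst] with p hp
    simp only [uncurry, hh_def, hA_def, indicator_apply, mem_setOf_eq, hg_eq p.1 hp]
  have hf_aesm : AEStronglyMeasurable (uncurry f) (ν.prod lam) :=
    (((hF_meas.comp measurable_fst).indicator hA_meas).aestronglyMeasurable).congr hf_ae.symm
  have hh_aesm : AEStronglyMeasurable (uncurry h) (ν.prod lam) :=
    ((measurable_const.indicator hA_meas).aestronglyMeasurable).congr hh_ae.symm
  -- |h| = h
  have habs : ∀ x r, ‖h x r‖ = h x r := by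
    intro x r
    by_cases hxr : r < γ x <;> simp [hh_def, hxr]
  -- slice of lambda
  have hlam_slice : ∀ x ∈ Ioo (0:ℝ) 1, lam (Iio (γ x)) = ENNReal.ofReal (γ x) := by
    intro x hx
    rw [hlam_def, Measure.restrict_apply measurableSet_Iio]
    have : Iio (γ x) ∩ Ioc 0 (γ δ) = Ioo 0 (γ x) := by
      ext r
      constructor
      · rintro ⟨h1, h2, _⟩; exact ⟨h2, h1⟩
      · rintro ⟨h1, h2⟩; exact ⟨h2, h1, le_trans h2.le (hγ_le x hx)⟩
    rw [this, Real.volume_Ioo, sub_zero]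
  -- inner integrals of h
  have hcomp : ∀ x ∈ Ioo (0:ℝ) 1, ∫ r, h x r ∂lam = γ x := by
    intro x hx
    have h1 : (fun r => h x r) = (Iio (γ x)).indicator (fun _ => (1:ℝ)) := by
      ext r
      simp only [hh_def, indicator_apply, mem_Iio]
    rw [h1, integral_indicator measurableSet_Iio, setIntegral_const, smul_eq_mul, mul_one,
      measureReal_def, hlam_slice x hx, ENNReal.toReal_ofReal (hγ_nonneg x)]
  -- Integrability of h on the product
  have hh_int : Integrable (uncurry h) (ν.prod lam) := by
    rw [integrable_prod_iff hh_aesm]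
    constructor
    · apply Eventually.of_forall
      intro x
      have h1 : (fun r => uncurry h (x, r)) = (Iio (γ x)).indicator (fun _ => (1:ℝ)) := by
        ext r
        simp only [uncurry, hh_def, indicator_apply, mem_Iio]
      rw [h1]
      exact (integrable_const (1:ℝ)).indicator measurableSet_Iio
    · have : (fun x => ∫ r, ‖uncurry h (x, r)‖ ∂lam) =ᵐ[ν] γ := by
        filter_upwards [ae_restrict_mem measurableSet_Ioo] with x hx
        have : (fun r => ‖uncurry h (x, r)‖) = fun r => h x r := by
          ext r; exact habs x r
        rw [this, hcomp x hx]
      exact hγ_int.congr this.symm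
  -- Integrability of f on the product
  have hf_int : Integrable (uncurry f) (ν.prod lam) := by
    apply Integrable.mono' (hh_int.const_mul C) hf_aesm
    apply Eventually.of_forall
    intro p
    by_cases hp : p.2 < γ p.1
    · simp only [uncurry, hf_def, hh_def, hp, if_true, mul_one]
      exact hF_bd p.1
    · simp [uncurry, hf_def, hh_def, hp]
  -- Step 1 : rewrite the integral
  have step1 : ∫ x in Ioo 0 1, F x * (γ x : ℂ) ∂μ = ∫ x, (∫ r, f x r ∂lam) ∂ν := by
    apply integral_congr_ae
    filter_upwards [ae_restrict_mem measurableSet_Ioo] with x hx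
    have h1 : (fun r => f x r) = (Iio (γ x)).indicator (fun _ => F x) := by
      ext r
      simp only [hf_def, indicator_apply, mem_Iio]
    rw [h1, integral_indicator measurableSet_Iio, setIntegral_const, measureReal_def, hlam_slice x hx,
      ENNReal.toReal_ofReal (hγ_nonneg x), Complex.real_smul, mul_comm]
  -- the slice sets
  set T : ℝ → Set ℝ := fun r => {x | r < g x} ∩ Ioo 0 1 with hT_def
  have hSg_meas : ∀ r : ℝ, MeasurableSet {x | r < g x} :=
    fun r => measurableSet_lt measurable_const hg_meas
  have hT_mem : ∀ r x, x ∈ T r ↔ (x ∈ Ioo (0:ℝ) 1 ∧ r < γ x) := by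
    intro r x
    constructor
    · rintro ⟨h1, h2⟩
      have h1' : r < g x := h1
      rw [hg_eq x h2] at h1'
      exact ⟨h2, h1'⟩
    · rintro ⟨h1, h2⟩
      have h2' : r < g x := by rw [hg_eq x h1]; exact h2
      exact ⟨h2', h1⟩
  -- G r = ∫ over slice, m r = measure of slice
  have hG_eq : ∀ r, (∫ x, f x r ∂ν) = ∫ x in T r, F x ∂μ := by
    intro r
    have h1 : (fun x => f x r) =ᵐ[ν] ({x | r < g x}).indicator F := by
      filter_upwards [ae_restrict_mem measurableSet_Ioo] with x hx
      simp only [hf_def, indicator_apply, mem_setOf_eq, hg_eq x hx]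
    rw [integral_congr_ae h1, integral_indicator (hSg_meas r), hν_def,
      Measure.restrict_restrict (hSg_meas r)]
  have hm_eq : ∀ r, (∫ x, h x r ∂ν) = (μ (T r)).toReal := by
    intro r
    have h1 : (fun x => h x r) =ᵐ[ν] ({x | r < g x}).indicator (fun _ => (1:ℝ)) := by
      filter_upwards [ae_restrict_mem measurableSet_Ioo] with x hx
      simp only [hh_def, indicator_apply, mem_setOf_eq, hg_eq x hx]
    rw [integral_congr_ae h1, integral_indicator (hSg_meas r), setIntegral_const, smul_eq_mul,
      mul_one, measureReal_def, hν_def, Measure.restrict_apply (hSg_meas r)]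
  -- key slice estimate
  have key : ∀ r ∈ Ioc (0:ℝ) (γ δ), ‖∫ x in T r, F x ∂μ‖ ≤ ε/2 * (μ (T r)).toReal := by
    intro r hr
    have hfin : μ (T r) < ⊤ := by
      have hg_int : Integrable g ν := by
        apply hγ_int.congr
        filter_upwards [ae_restrict_mem measurableSet_Ioo] with x hx
        exact (hg_eq x hx).symm
      have h1 : μ (T r) = ν {x | r < g x} := by
        rw [hν_def, Measure.restrict_apply (hSg_meas r)]
      rw [h1]
      refine lt_of_le_of_lt (measure_mono ?_) (hg_int.measure_ge_lt_top hr.1)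
      intro x hx
      exact le_of_lt (show r < g x from hx)
    by_cases hne : (T r).Nonempty
    swap
    · rw [not_nonempty_iff_eq_empty] at hne
      simp [hne]
    set a : ℝ := sInf (T r) with ha_def
    have hbdd_below : BddBelow (T r) := ⟨0, fun x hx => (hx.2.1).le⟩
    have hup : ∀ x ∈ T r, ∀ y, x ≤ y → y < 1 → y ∈ T r := by
      intro x hx y hxy hy1
      rw [hT_mem] at hx ⊢
      have hy : y ∈ Ioo (0:ℝ) 1 := ⟨lt_of_lt_of_le hx.1.1 hxy, hy1⟩
      exact ⟨hy, lt_of_lt_of_le hx.2 (hγ_mono hx.1 hy hxy)⟩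
    have hδT : δ ∈ T r := by
      obtain ⟨x0, hx0⟩ := hne
      rw [hT_mem] at hx0
      rw [hT_mem]
      refine ⟨hδ, ?_⟩
      rcases le_or_gt x0 δ with hc | hc
      · exact lt_of_lt_of_le hx0.2 (hγ_mono hx0.1 hδ hc)
      · rw [← hγ_const x0 ⟨hc.le, hx0.1.2⟩]
        exact hx0.2
    have haδ : a ≤ δ := csInf_le hbdd_below hδT
    have hIoo_sub : Ioo a 1 ⊆ T r := by
      intro y hy
      obtain ⟨x, hx, hxy⟩ := exists_lt_of_csInf_lt hne hy.1
      exact hup x hx y hxy.le hy.2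
    have hsub_Ico : T r ⊆ Ico a 1 := fun x hx => ⟨csInf_le hbdd_below hx, hx.2.2⟩
    have ha_pos : 0 < a := by
      by_contra hcon
      push_neg at hcon
      have hsub : Ioo (0:ℝ) 1 ⊆ T r := fun y hy =>
        hIoo_sub ⟨lt_of_le_of_lt hcon hy.1, hy.2⟩
      have h2 : (⊤ : ENNReal) ≤ μ (T r) := hμ_inf ▸ measure_mono hsub
      exact absurd hfin (not_lt.mpr h2)
    by_cases haT : a ∈ T r
    · have hTeq : T r = Ico a 1 := by
        apply subset_antisymm hsub_Ico
        rintro x ⟨h1, h2⟩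
        rcases eq_or_lt_of_le h1 with rfl | hlt
        · exact haT
        · exact hIoo_sub ⟨hlt, h2⟩
      rw [hTeq]
      exact (hFδ a ⟨ha_pos, haδ⟩).le
    · have hTeq : T r = Ioo a 1 := by
        apply subset_antisymm
        · intro x hx
          exact ⟨lt_of_le_of_ne (hsub_Ico hx).1 (fun hax => haT (by rw [hax]; exact hx)),
            hx.2.2⟩
        · exact hIoo_sub
      have haδ' : a < δ := lt_of_le_of_ne haδ (fun hc => haT (by rw [hc]; exact hδT))
      set s : ℕ → Set ℝ := fun n => Ico (a + (δ - a)/(n+1)) 1 with hs_def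
      have hsm : ∀ n, MeasurableSet (s n) := fun n => measurableSet_Ico
      have hδa : (0:ℝ) < δ - a := by linarith
      have han_gt : ∀ n : ℕ, a < a + (δ - a)/(n+1) := by
        intro n
        have h0 : (0:ℝ) < (δ - a)/(n+1) := by positivity
        linarith
      have han_le : ∀ n : ℕ, a + (δ - a)/(n+1) ≤ δ := by
        intro n
        have h1 : (δ - a)/(n+1) ≤ (δ - a) := by
          apply div_le_self (by linarith)
          have : (0:ℝ) ≤ n := Nat.cast_nonneg n
          linarith
        linarith
      have h_mono : Monotone s := by
        intro n m hnm
        apply Ico_subset_Ico_left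
        have hδa' : (0:ℝ) ≤ δ - a := hδa.le
        have hnm' : (n:ℝ) + 1 ≤ (m:ℝ) + 1 := by exact_mod_cast Nat.succ_le_succ hnm
        gcongr
      have h_union : ⋃ n, s n = Ioo a 1 := by
        ext x
        simp only [mem_iUnion, hs_def, mem_Ico, mem_Ioo]
        constructor
        · rintro ⟨n, h1, h2⟩
          exact ⟨lt_of_lt_of_le (han_gt n) h1, h2⟩
        · rintro ⟨h1, h2⟩
          obtain ⟨n, hn⟩ := exists_nat_gt ((δ - a)/(x - a))
          refine ⟨n, ?_, h2⟩
          have hxa : 0 < x - a := by linarith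
          have hδa : 0 ≤ δ - a := by linarith
          have h3 : (δ - a)/(n+1) ≤ x - a := by
            rw [div_le_iff₀ (by positivity)]
            have h4 : (δ - a)/(x - a) < n + 1 := by
              have : (n:ℝ) ≤ n + 1 := by linarith
              linarith
            rw [div_lt_iff₀ hxa] at h4
            nlinarith
          linarith
      have hFi : IntegrableOn F (Ioo a 1) μ := by
        apply Measure.integrableOn_of_bounded (M := C)
        · rw [← hTeq]; exact hfin.ne
        · exact hF_meas.aestronglyMeasurable
        · exact Eventually.of_forall (fun x => hF_bd x)
      have h_tendsto := tendsto_setIntegral_of_monotone hsm h_mono (h_union ▸ hFi)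
      rw [h_union] at h_tendsto
      have hbound : ∀ n, ‖∫ x in s n, F x ∂μ‖ ≤ ε/2 * (μ (Ioo a 1)).toReal := by
        intro n
        refine le_trans (hFδ _ ⟨by linarith [han_gt n, ha_pos], han_le n⟩).le ?_
        apply mul_le_mul_of_nonneg_left _ (by linarith)
        apply ENNReal.toReal_mono (by rw [← hTeq]; exact hfin.ne)
        apply measure_mono
        intro x hx
        exact ⟨lt_of_lt_of_le (han_gt n) hx.1, hx.2⟩
      rw [hTeq]
      exact le_of_tendsto h_tendsto.norm (Eventually.of_forall hbound)
  -- mass computation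
  have hmass : ∫ r, (∫ x, h x r ∂ν) ∂lam ≤ 1 := by
    rw [← integral_integral_swap hh_int]
    have : ∫ x, (∫ r, h x r ∂lam) ∂ν = ∫ x, γ x ∂ν := by
      apply integral_congr_ae
      filter_upwards [ae_restrict_mem measurableSet_Ioo] with x hx
      exact hcomp x hx
    rw [this]
    exact hγ_mass
  have hm_int : Integrable (fun r => ∫ x, h x r ∂ν) lam := hh_int.integral_prod_right
  -- final chain
  calc ‖∫ x in Ioo 0 1, F x * (γ x : ℂ) ∂μ‖
      = ‖∫ r, (∫ x, f x r ∂ν) ∂lam‖ := by rw [step1, integral_integral_swap hf_int]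
    _ ≤ ∫ r, ‖∫ x, f x r ∂ν‖ ∂lam := norm_integral_le_integral_norm _
    _ ≤ ∫ r, ε/2 * (∫ x, h x r ∂ν) ∂lam := by
        apply integral_mono_of_nonneg (Eventually.of_forall fun r => norm_nonneg _)
          (hm_int.const_mul _)
        filter_upwards [ae_restrict_mem measurableSet_Ioc] with r hr
        rw [hG_eq r, hm_eq r]
        exact key r hr
    _ = ε/2 * ∫ r, (∫ x, h x r ∂ν) ∂lam := integral_const_mul _ _
    _ ≤ ε/2 * 1 := mul_le_mul_of_nonneg_left hmass (by linarith)
    _ = ε/2 := mul_one _
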